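/- Pointwise form of Lemma B.6 for binary downstream tasks: For every logits function g : X → ℝ^K, Σ_{1≤i<j≤K} (p_i p_j / S)·L_pair(i,j,g) ≤ (u/l)²·L_pre(g). That is, the average of the binary task losses of g over pairs of classes, weighted proportionally to p_i p_j, is at most (u/l)² times the K-class cross-entropy pretraining loss of g. -/
import Mathlib


open scoped BigOperators

/-- `K`-class cross-entropy pretraining loss of logits `g`. -/
noncomputable def Lpre {X : Type*} [Fintype X] {K : ℕ}
    (p : Fin K → ℝ) (D : Fin K → X → ℝ) (g : X → Fin K → ℝ) : ℝ :=
  ∑ i, p i * ∑ x, D i x *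
    Real.log ((∑ k, Real.exp (g x k)) / Real.exp (g x i))

/-- Binary task loss of logits `g` on the pair of classes `i, j`. -/
noncomputable def Lpair {X : Type*} [Fintype X] {K : ℕ}
    (D : Fin K → X → ℝ) (i j : Fin K) (g : X → Fin K → ℝ) : ℝ :=
  (1 / 2) * ∑ x, D i x *
      Real.log ((Real.exp (g x i) + Real.exp (g x j)) / Real.exp (g x i)) +
    (1 / 2) * ∑ x, D j x *
      Real.log ((Real.exp (g x i) + Real.exp (g x j)) / Real.exp (g x j))

/-- Symmetrization identity: summing `c i + c j` over ordered pairs `i < j`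
gives `(K - 1)` times the total sum. -/
lemma sum_pairs_add {K : ℕ} (c : Fin K → ℝ) :
    ∑ i, ∑ j, (if i < j then c i + c j else 0) = ((K : ℝ) - 1) * ∑ i, c i := by
  calc ∑ i, ∑ j, (if i < j then c i + c j else 0)
      = ∑ i, ∑ j, ((if i < j then c i else 0) + (if i < j then c j else 0)) := by
        refine Finset.sum_congr rfl fun i _ => Finset.sum_congr rfl fun j _ => ?_
        split <;> simp
    _ = (∑ i, ∑ j, if i < j then c i else 0)
        + ∑ i, ∑ j, (if i < j then c j else 0) := by
        simp [Finset.sum_add_distrib]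
    _ = (∑ i, ∑ j, if i < j then c i else 0)
        + ∑ i, ∑ j, (if j < i then c i else 0) := by
        congr 1
        rw [Finset.sum_comm]
    _ = ∑ i, ∑ j, ((if i < j then c i else 0) + (if j < i then c i else 0)) := by
        simp [Finset.sum_add_distrib]
    _ = ∑ i, ∑ j, (c i - (if i = j then c i else 0)) := by
        refine Finset.sum_congr rfl fun i _ => Finset.sum_congr rfl fun j _ => ?_
        rcases lt_trichotomy i j with h | h | h
        · simp [h, h.ne, asymm h]
        · simp [h, lt_irrefl]
        · simp [h, h.ne', asymm h, not_lt_of_gt h]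
    _ = ∑ i : Fin K, ((K : ℝ) * c i - c i) := by
        refine Finset.sum_congr rfl fun i _ => ?_
        rw [Finset.sum_sub_distrib, Finset.sum_const, Finset.sum_ite_eq]
        simp [mul_comm]
    _ = ((K : ℝ) - 1) * ∑ i, c i := by
        simp [Finset.sum_sub_distrib, Finset.mul_sum, sub_mul]

/-- Pointwise form of Lemma B.6 for binary downstream tasks: the `p_i p_j`-weighted
average of binary task losses of `g` over pairs of classes is at most `(u/l)²` times
the `K`-class cross-entropy pretraining loss of `g`. -/
theorem pairwise_loss_le_pretraining_loss
    {X : Type*} [Fintype X] [Nonempty X] {K : ℕ} (hK : 2 ≤ K)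
    (D : Fin K → X → ℝ) (hD0 : ∀ i x, 0 ≤ D i x) (hD1 : ∀ i, ∑ x, D i x = 1)
    (p : Fin K → ℝ) (hp1 : ∑ i, p i = 1)
    (l u : ℝ) (hl : 0 < l) (hpl : ∀ i, l ≤ p i) (hpu : ∀ i, p i ≤ u)
    (g : X → Fin K → ℝ) :
    (∑ i, ∑ j, if i < j then
        (p i * p j / (∑ a, ∑ b, if a < b then p a * p b else 0)) * Lpair D i j g
      else 0) ≤ (u / l) ^ 2 * Lpre p D g := by
  classical
  have hK1 : (1 : ℝ) ≤ (K : ℝ) - 1 := by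
    have : (2 : ℝ) ≤ (K : ℝ) := by exact_mod_cast hK
    linarith
  set S : ℝ := ∑ a, ∑ b, if a < b then p a * p b else 0 with hSdef
  set A : Fin K → ℝ := fun i => ∑ x, D i x *
      Real.log ((∑ k, Real.exp (g x k)) / Real.exp (g x i)) with hAdef
  -- A is nonnegative
  have hA0 : ∀ i, 0 ≤ A i := by
    intro i
    apply Finset.sum_nonneg
    intro x _
    apply mul_nonneg (hD0 i x)
    apply Real.log_nonneg
    rw [le_div_iff₀ (Real.exp_pos _)]
    simpa using Finset.single_le_sum (f := fun k => Real.exp (g x k))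
      (fun k _ => (Real.exp_pos (g x k)).le) (Finset.mem_univ i)
  -- pairwise loss bounded by the average of marginal losses
  have hsum_le : ∀ (x : X) (i j : Fin K), i ≠ j →
      Real.exp (g x i) + Real.exp (g x j) ≤ ∑ k, Real.exp (g x k) := by
    intro x i j hij
    have h := Finset.sum_le_sum_of_subset_of_nonneg
      (Finset.subset_univ ({i, j} : Finset (Fin K)))
      (fun k _ _ => (Real.exp_pos (g x k)).le)
    rwa [Finset.sum_pair hij] at h
  have hLpair : ∀ i j : Fin K, i ≠ j → Lpair D i j g ≤ (A i + A j) / 2 := by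
    intro i j hij
    have h1 : ∑ x, D i x *
        Real.log ((Real.exp (g x i) + Real.exp (g x j)) / Real.exp (g x i)) ≤ A i := by
      apply Finset.sum_le_sum
      intro x _
      apply mul_le_mul_of_nonneg_left _ (hD0 i x)
      apply Real.log_le_log (by positivity)
      apply div_le_div_of_nonneg_right (hsum_le x i j hij) (Real.exp_pos _).le
    have h2 : ∑ x, D j x *
        Real.log ((Real.exp (g x i) + Real.exp (g x j)) / Real.exp (g x j)) ≤ A j := by
      apply Finset.sum_le_sum
      intro x _
      apply mul_le_mul_of_nonneg_left _ (hD0 j x)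
      apply Real.log_le_log (by positivity)
      apply div_le_div_of_nonneg_right (hsum_le x i j hij) (Real.exp_pos _).le
    unfold Lpair
    linarith
  -- lower bound on S
  have hS : l * ((K : ℝ) - 1) / 2 ≤ S := by
    have hstep : ∑ i, ∑ j, (if i < j then l / 2 * (p i + p j) else 0) ≤ S := by
      apply Finset.sum_le_sum
      intro i _
      apply Finset.sum_le_sum
      intro j _
      split
      · nlinarith [hpl i, hpl j, hl]
      · exact le_rfl
    have heq : ∑ i, ∑ j, (if i < j then l / 2 * (p i + p j) else 0)
        = l * ((K : ℝ) - 1) / 2 := by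
      have : ∑ i, ∑ j, (if i < j then l / 2 * (p i + p j) else 0)
          = l / 2 * ∑ i, ∑ j, (if i < j then p i + p j else 0) := by
        simp [Finset.mul_sum, mul_ite, mul_zero]
      rw [this, sum_pairs_add, hp1]
      ring
    linarith
  have hSpos : 0 < S := lt_of_lt_of_le (by nlinarith) hS
  -- bound each summand
  have hmain : (∑ i, ∑ j, if i < j then (p i * p j / S) * Lpair D i j g else 0)
      ≤ ∑ i, ∑ j, (if i < j then (u ^ 2 / (2 * S)) * (A i + A j) else 0) := by
    apply Finset.sum_le_sum
    intro i _
    apply Finset.sum_le_sum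
    intro j _
    split
    case isTrue h =>
      have hij : i ≠ j := ne_of_lt h
      have hpij0 : 0 ≤ p i * p j :=
        mul_nonneg (hl.le.trans (hpl i)) (hl.le.trans (hpl j))
      have hAij0 : 0 ≤ (A i + A j) / 2 := by
        have := hA0 i; have := hA0 j; linarith
      have hpu2 : p i * p j ≤ u ^ 2 := by nlinarith [hpu i, hpu j, hpl i, hpl j, hl]
      have key : p i * p j * Lpair D i j g ≤ u ^ 2 * ((A i + A j) / 2) :=
        le_trans (mul_le_mul_of_nonneg_left (hLpair i j hij) hpij0)
          (mul_le_mul_of_nonneg_right hpu2 hAij0)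
      calc (p i * p j / S) * Lpair D i j g
          = (p i * p j * Lpair D i j g) / S := by ring
        _ ≤ (u ^ 2 * ((A i + A j) / 2)) / S := by
            exact div_le_div_of_nonneg_right key hSpos.le
        _ = (u ^ 2 / (2 * S)) * (A i + A j) := by
            field_simp
    case isFalse h => exact le_rfl
  -- rewrite the RHS of hmain
  have hrhs : (∑ i, ∑ j, if i < j then (u ^ 2 / (2 * S)) * (A i + A j) else 0)
      = (u ^ 2 / (2 * S)) * (((K : ℝ) - 1) * ∑ i, A i) := by
    rw [← sum_pairs_add A]
    simp [Finset.mul_sum, mul_ite, mul_zero]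
  -- relate Lpre to A
  have hLpre_eq : Lpre p D g = ∑ i, p i * A i := rfl
  have hSA0 : 0 ≤ ∑ i, A i := Finset.sum_nonneg fun i _ => hA0 i
  have hLpre_ge : l * (∑ i, A i) ≤ Lpre p D g := by
    rw [hLpre_eq, Finset.mul_sum]
    exact Finset.sum_le_sum fun i _ => mul_le_mul_of_nonneg_right (hpl i) (hA0 i)
  have hLpre0 : 0 ≤ Lpre p D g := le_trans (by positivity) hLpre_ge
  -- final numeric bound
  have hfinal : (u ^ 2 / (2 * S)) * (((K : ℝ) - 1) * ∑ i, A i)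
      ≤ (u / l) ^ 2 * Lpre p D g := by
    have h2S : (0 : ℝ) < 2 * S := by linarith
    have hl2 : (0 : ℝ) < l ^ 2 := by positivity
    rw [show (u ^ 2 / (2 * S)) * (((K : ℝ) - 1) * ∑ i, A i)
        = u ^ 2 * (((K : ℝ) - 1) * ∑ i, A i) / (2 * S) by ring,
      show (u / l) ^ 2 * Lpre p D g = u ^ 2 * Lpre p D g / l ^ 2 by ring,
      div_le_div_iff₀ h2S hl2]
    have t1 : l * ((K : ℝ) - 1) * (l * ∑ i, A i) ≤ (2 * S) * Lpre p D g := by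
      apply mul_le_mul (by linarith) hLpre_ge (by positivity) (by linarith)
    calc u ^ 2 * (((K : ℝ) - 1) * ∑ i, A i) * l ^ 2
        = u ^ 2 * (l * ((K : ℝ) - 1) * (l * ∑ i, A i)) := by ring
      _ ≤ u ^ 2 * ((2 * S) * Lpre p D g) := by
          exact mul_le_mul_of_nonneg_left t1 (sq_nonneg u)
      _ = u ^ 2 * Lpre p D g * (2 * S) := by ring
  calc (∑ i, ∑ j, if i < j then (p i * p j / S) * Lpair D i j g else 0)
      ≤ (u ^ 2 / (2 * S)) * (((K : ℝ) - 1) * ∑ i, A i) := by rw [← hrhs]; exact hmain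
    _ ≤ (u / l) ^ 2 * Lpre p D g := hfinal
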